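/- Let Q be a positive definite quadratic form on ℝ^k with associated bilinear form B(x,y) = Q(x+y) - Q(x) - Q(y), and for a vector a with Q(a) ≠ 0 define φ_{a,Q}(x) = (a·Q(x) + x) / (Q(x)·Q(a) + B(x,a) + 1). Then for vectors a, b and any x such that all expressions are defined (denominators nonzero), φ_{a,Q}(φ_{b,Q}(x)) = φ_{a+b,Q}(x). -/

import Mathlib

/-- The basic map `φ_{a,Q}(x) = (a·Q(x) + x) / (Q(x)·Q(a) + B(x,a) + 1)`, where
`B(x,y) = Q(x+y) - Q(x) - Q(y)` is the bilinear form associated to `Q`. -/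
noncomputable def phiAQ {k : ℕ} (Q : QuadraticForm ℝ (Fin k → ℝ)) (a x : Fin k → ℝ) :
    Fin k → ℝ :=
  (Q x * Q a + (Q (x + a) - Q x - Q a) + 1)⁻¹ • (Q x • a + x)

open QuadraticMap in
theorem stmt6 {k : ℕ} (Q : QuadraticForm ℝ (Fin k → ℝ)) (hQ : Q.PosDef)
    (a b x : Fin k → ℝ)
    (hb : Q x * Q b + (Q (x + b) - Q x - Q b) + 1 ≠ 0)
    (hab : Q x * Q (a + b) + (Q (x + (a + b)) - Q x - Q (a + b)) + 1 ≠ 0) :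
    phiAQ Q a (phiAQ Q b x) = phiAQ Q (a + b) x := by
  set e := Q x * Q b + (Q (x + b) - Q x - Q b) + 1 with he
  have hpol : ∀ u v : Fin k → ℝ, Q (u + v) - Q u - Q v = polar Q u v := fun u v => rfl
  set y := phiAQ Q b x with hy
  have hw : Q (Q x • b + x) = Q x * e := by
    have h1 : Q (Q x • b + x) = Q (Q x • b) + Q x + polar Q (Q x • b) x := by
      rw [← hpol]; ring
    rw [h1, Q.map_smul, polar_smul_left, polar_comm, ← hpol, he]
    simp [smul_eq_mul]; ring
  have hQy : Q y = Q x * e⁻¹ := by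
    rw [hy, phiAQ, Q.map_smul, ← he, hw]
    rw [smul_eq_mul]
    field_simp
  have hpy : polar Q y a = e⁻¹ * (Q x * polar Q b a + polar Q x a) := by
    rw [hy, phiAQ, ← he, polar_smul_left, polar_add_left, polar_smul_left]
    simp [smul_eq_mul]
  have hF : Q x * Q (a + b) + (Q (x + (a + b)) - Q x - Q (a + b)) + 1
      = Q x * Q a + Q x * Q b + Q x * polar Q a b + polar Q x a + polar Q x b + 1 := by
    rw [hpol, polar_add_right, show Q (a + b) = Q a + Q b + polar Q a b from by rw [← hpol]; ring]
    ring
  set F := Q x * Q (a + b) + (Q (x + (a + b)) - Q x - Q (a + b)) + 1 with hFdef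
  have hD : Q y * Q a + (Q (y + a) - Q y - Q a) + 1 = e⁻¹ * F := by
    rw [hpol, hpy, hQy, hF]
    field_simp
    rw [polar_comm Q b a, ← hpol x b]
    ring
  have hyx : Q y • a + y = e⁻¹ • (Q x • (a + b) + x) := by
    rw [hQy, hy, phiAQ, ← he]
    rw [smul_add, smul_add, smul_add, mul_smul, smul_smul]
    module
  rw [phiAQ, phiAQ, hD, hyx, ← hFdef, mul_inv, inv_inv, smul_smul,
    show e * F⁻¹ * e⁻¹ = F⁻¹ from by field_simp]
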